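/- Let p be a real number with 0 < p < 1/2 and let ℓ ≥ 1 and i ≥ 0 be integers. There exists an integer n_0 such that for all n > n_0, μ_p(tilde{F}^ℓ ∪ bar{F}^ℓ_i) < 1.001·f(ℓ, i, p), where the families are taken in 2^[n]. -/

import Mathlib

open Finset

open scoped Classical

noncomputable section

/-- The `p`-weight of a family of subsets of `[n] = {1,…,n}`. -/
def mu (n : ℕ) (p : ℝ) (𝓕 : Finset (Finset ℕ)) : ℝ :=
  ∑ F ∈ 𝓕, p ^ F.card * (1 - p) ^ (n - F.card)

/-- Two families are cross `t`-intersecting. -/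
def CrossIntersecting (t : ℕ) (𝓐 𝓑 : Finset (Finset ℕ)) : Prop :=
  ∀ A ∈ 𝓐, ∀ B ∈ 𝓑, t ≤ (A ∩ B).card

/-- The Frankl family `F_i^ℓ = {F ⊆ [n] : |F ∩ [ℓ+2i]| ≥ ℓ+i}`. -/
def FF (n ℓ i : ℕ) : Finset (Finset ℕ) :=
  (Finset.Icc 1 n).powerset.filter fun F => ℓ + i ≤ (F ∩ Finset.Icc 1 (ℓ + 2 * i)).card

/-- `F` reaches level `ℓ`: there is `0 ≤ j ≤ n` with `2|F ∩ [j]| ≥ j + ℓ`. -/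
def Reaches (n ℓ : ℕ) (F : Finset ℕ) : Prop :=
  ∃ j ≤ n, j + ℓ ≤ 2 * (F ∩ Finset.Icc 1 j).card

/-- The number of steps `0 ≤ j ≤ n` at which `F` hits level `ℓ`, i.e. `2|F ∩ [j]| = j + ℓ`. -/
def hitCount (n ℓ : ℕ) (F : Finset ℕ) : ℕ :=
  ((Finset.range (n + 1)).filter fun j => 2 * (F ∩ Finset.Icc 1 j).card = j + ℓ).card

/-- `F^ℓ`: all subsets of `[n]` reaching level `ℓ`. -/
def Fwalk (n ℓ : ℕ) : Finset (Finset ℕ) :=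
  (Finset.Icc 1 n).powerset.filter fun F => Reaches n ℓ F

/-- `tilde F^ℓ`: all subsets of `[n]` reaching level `ℓ+1`. -/
def Ftilde (n ℓ : ℕ) : Finset (Finset ℕ) :=
  (Finset.Icc 1 n).powerset.filter fun F => Reaches n (ℓ + 1) F

/-- `hat F^ℓ`: subsets not reaching level `ℓ+1` and hitting level `ℓ` exactly once. -/
def Fhat (n ℓ : ℕ) : Finset (Finset ℕ) :=
  (Finset.Icc 1 n).powerset.filter fun F => ¬ Reaches n (ℓ + 1) F ∧ hitCount n ℓ F = 1

/-- `ddot F^ℓ`: subsets not reaching level `ℓ+1` and hitting level `ℓ` at least twice. -/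
def Fddot (n ℓ : ℕ) : Finset (Finset ℕ) :=
  (Finset.Icc 1 n).powerset.filter fun F => ¬ Reaches n (ℓ + 1) F ∧ 2 ≤ hitCount n ℓ F

/-- The `(i,j)`-shift of a single set `F`, relative to the family `𝓕`. -/
def shiftSet (i j : ℕ) (𝓕 : Finset (Finset ℕ)) (F : Finset ℕ) : Finset ℕ :=
  if j ∈ F ∧ i ∉ F ∧ insert i (F.erase j) ∉ 𝓕 then insert i (F.erase j) else F

/-- The `(i,j)`-shift `s_{ij}(𝓕)` of a family `𝓕`. -/
def shiftFam (i j : ℕ) (𝓕 : Finset (Finset ℕ)) : Finset (Finset ℕ) :=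
  𝓕.image (shiftSet i j 𝓕)

/-- A family is shifted if all shifts `s_{ij}`, `1 ≤ i < j ≤ n`, fix it. -/
def Shifted (n : ℕ) (𝓕 : Finset (Finset ℕ)) : Prop :=
  ∀ i j : ℕ, 1 ≤ i → i < j → j ≤ n → shiftFam i j 𝓕 = 𝓕

/-- A family of subsets of `[n]` is inclusion maximal. -/
def InclMax (n : ℕ) (𝓕 : Finset (Finset ℕ)) : Prop :=
  ∀ F ∈ 𝓕, ∀ F' : Finset ℕ, F ⊆ F' → F' ⊆ Finset.Icc 1 n → F' ∈ 𝓕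

/-- `λ(𝓕)`: the largest `λ ≥ 0` such that every member of `𝓕` reaches level `λ`. -/
def lam (n : ℕ) (𝓕 : Finset (Finset ℕ)) : ℕ :=
  Nat.findGreatest (fun ℓ => ∀ F ∈ 𝓕, Reaches n ℓ F) n

/-- Two families of subsets of `[n]` are isomorphic via a permutation of `[n]`. -/
def Isom (n : ℕ) (𝓖₁ 𝓖₂ : Finset (Finset ℕ)) : Prop :=
  ∃ σ : Equiv.Perm ℕ, (∀ k ∈ Finset.Icc 1 n, σ k ∈ Finset.Icc 1 n) ∧
    𝓖₁ = 𝓖₂.image fun G => G.image σ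

/-- The quantity `f(ℓ, i, p)` from Ahlswede–Khachatrian type estimates. -/
def fLP (ℓ i : ℕ) (p : ℝ) : ℝ :=
  (p / (1 - p)) ^ (ℓ + 1) +
    (Nat.choose (ℓ + 2 * i) i : ℝ) * ((ℓ + 1 : ℝ) / (ℓ + i + 1)) * p ^ (ℓ + i) *
      (1 - p) ^ i * (1 - p / (1 - p))

/-- The walk `D_s^t(i) = [t−1] ∪ {t+s,…,t+2s} ∪ {t+2s+i+2k : k ≥ 1} ∩ [n]`. -/
def DD (n t s i : ℕ) : Finset ℕ :=
  Finset.Icc 1 (t - 1) ∪ Finset.Icc (t + s) (t + 2 * s) ∪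
    ((Finset.Icc 1 n).filter fun m => ∃ k ∈ Finset.Icc 1 n, m = t + 2 * s + i + 2 * k)

end
noncomputable section Aux

open Finset

/-- Measure of the family of subsets of `[n]` reaching level `m`. -/
def wR (p : ℝ) (n m : ℕ) : ℝ :=
  mu n p (((Finset.Icc 1 n).powerset).filter fun F => Reaches n m F)

lemma Icc_one_zero : Finset.Icc 1 0 = (∅ : Finset ℕ) := Finset.Icc_eq_empty (by omega)

lemma reaches_zero (n : ℕ) (F : Finset ℕ) : Reaches n 0 F :=
  ⟨0, Nat.zero_le _, by simp⟩

lemma reaches_iff_pos {n m : ℕ} (hm : 1 ≤ m) (F : Finset ℕ) :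
    Reaches n m F ↔ ∃ j, 1 ≤ j ∧ j ≤ n ∧ j + m ≤ 2 * (F ∩ Finset.Icc 1 j).card := by
  constructor
  · rintro ⟨j, hj, h⟩
    rcases Nat.eq_zero_or_pos j with rfl | hj1
    · rw [Icc_one_zero, inter_empty] at h; simp at h; omega
    · exact ⟨j, hj1, hj, h⟩
  · rintro ⟨j, _, hj, h⟩; exact ⟨j, hj, h⟩

lemma mu_powerset_full (p : ℝ) (n : ℕ) : mu n p ((Finset.Icc 1 n).powerset) = 1 := by
  unfold mu
  have hcard : (Finset.Icc 1 n).card = n := by simp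
  have key := Finset.sum_powerset_apply_card (fun m => p ^ m * (1 - p) ^ (n - m))
    (x := Finset.Icc 1 n)
  simp only [hcard] at key
  rw [key]
  have := add_pow p (1 - p) n
  simp only [add_sub_cancel, one_pow] at this
  calc ∑ m ∈ range (n + 1), n.choose m • (p ^ m * (1 - p) ^ (n - m))
      = ∑ m ∈ range (n + 1), p ^ m * (1 - p) ^ (n - m) * n.choose m := by
        refine Finset.sum_congr rfl fun m _ => ?_
        rw [nsmul_eq_mul]; ring
    _ = 1 := by rw [← this]

lemma mu_nonneg {p : ℝ} (hp0 : 0 < p) (hp1 : p < 1) (n : ℕ) (𝓕 : Finset (Finset ℕ)) :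
    0 ≤ mu n p 𝓕 := by
  refine Finset.sum_nonneg fun F _ => ?_
  exact mul_nonneg (pow_nonneg hp0.le _) (pow_nonneg (by linarith) _)

lemma mu_le_of_subset {p : ℝ} (hp0 : 0 < p) (hp1 : p < 1) {n : ℕ}
    {𝓕 𝓖 : Finset (Finset ℕ)} (h : 𝓕 ⊆ 𝓖) : mu n p 𝓕 ≤ mu n p 𝓖 := by
  refine Finset.sum_le_sum_of_subset_of_nonneg h fun F _ _ => ?_
  exact mul_nonneg (pow_nonneg hp0.le _) (pow_nonneg (by linarith) _)

lemma mu_union_le {p : ℝ} (hp0 : 0 < p) (hp1 : p < 1) (n : ℕ) (𝓕 𝓖 : Finset (Finset ℕ)) :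
    mu n p (𝓕 ∪ 𝓖) ≤ mu n p 𝓕 + mu n p 𝓖 := by
  have := Finset.sum_union_inter (s₁ := 𝓕) (s₂ := 𝓖)
    (f := fun F => p ^ F.card * (1 - p) ^ (n - F.card))
  unfold mu
  have h2 : 0 ≤ mu n p (𝓕 ∩ 𝓖) := mu_nonneg hp0 hp1 n _
  unfold mu at h2
  linarith

end Aux
noncomputable section Aux2

open Finset

lemma card_inter_up {n j : ℕ} {G : Finset ℕ} (hG : G ⊆ Finset.Icc 1 n) :
    ((G.image (· + 1)) ∩ Finset.Icc 1 j).card = (G ∩ Finset.Icc 1 (j - 1)).card := by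
  have h : (G.image (· + 1)) ∩ Finset.Icc 1 j = (G ∩ Finset.Icc 1 (j - 1)).image (· + 1) := by
    ext x
    simp only [Finset.mem_inter, Finset.mem_image, Finset.mem_Icc]
    constructor
    · rintro ⟨⟨y, hy, rfl⟩, h1, h2⟩
      have := Finset.mem_Icc.1 (hG hy)
      exact ⟨y, ⟨hy, by omega⟩, rfl⟩
    · rintro ⟨y, ⟨hy, hy2⟩, rfl⟩
      have := Finset.mem_Icc.1 (hG hy)
      exact ⟨⟨y, hy, rfl⟩, by omega, by omega⟩
  rw [h, Finset.card_image_of_injective _ (add_left_injective 1)]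

lemma one_not_mem_up {n : ℕ} {G : Finset ℕ} (hG : G ⊆ Finset.Icc 1 n) :
    1 ∉ G.image (· + 1) := by
  intro h
  obtain ⟨y, hy, hy1⟩ := Finset.mem_image.1 h
  have := Finset.mem_Icc.1 (hG hy); omega

lemma card_inter_insert_one {j : ℕ} (hj : 1 ≤ j) {S : Finset ℕ} (hS : 1 ∉ S) :
    ((insert 1 S) ∩ Finset.Icc 1 j).card = (S ∩ Finset.Icc 1 j).card + 1 := by
  have h : (insert 1 S) ∩ Finset.Icc 1 j = insert 1 (S ∩ Finset.Icc 1 j) := by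
    rw [Finset.insert_inter_of_mem (Finset.mem_Icc.2 ⟨le_refl 1, hj⟩)]
  rw [h, Finset.card_insert_of_notMem (fun hx => hS (Finset.mem_inter.1 hx).1)]

lemma reaches_up {n m : ℕ} (hm : 1 ≤ m) {G : Finset ℕ} (hG : G ⊆ Finset.Icc 1 n) :
    Reaches (n + 1) m (G.image (· + 1)) ↔ Reaches n (m + 1) G := by
  constructor
  · intro h
    obtain ⟨j, hj1, hj2, hj3⟩ := (reaches_iff_pos hm _).1 h
    rw [card_inter_up hG] at hj3
    exact ⟨j - 1, by omega, by omega⟩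
  · rintro ⟨j, hj, hcard⟩
    refine ⟨j + 1, by omega, ?_⟩
    rw [card_inter_up hG]
    simp only [Nat.add_sub_cancel]
    omega

lemma reaches_insert_up {n m : ℕ} (hm : 1 ≤ m) {G : Finset ℕ} (hG : G ⊆ Finset.Icc 1 n) :
    Reaches (n + 1) m (insert 1 (G.image (· + 1))) ↔ Reaches n (m - 1) G := by
  constructor
  · intro h
    obtain ⟨j, hj1, hj2, hj3⟩ := (reaches_iff_pos hm _).1 h
    rw [card_inter_insert_one hj1 (one_not_mem_up hG), card_inter_up hG] at hj3
    exact ⟨j - 1, by omega, by omega⟩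
  · rintro ⟨j, hj, hcard⟩
    refine ⟨j + 1, by omega, ?_⟩
    rw [card_inter_insert_one (by omega) (one_not_mem_up hG), card_inter_up hG]
    simp only [Nat.add_sub_cancel]
    omega

lemma Icc_one_succ (n : ℕ) : Finset.Icc 1 (n + 1) = insert 1 (Finset.Icc 2 (n + 1)) := by
  ext x; simp only [Finset.mem_Icc, Finset.mem_insert]; omega

lemma powerset_Icc_two (n : ℕ) :
    (Finset.Icc 2 (n + 1)).powerset = ((Finset.Icc 1 n).powerset).image (fun G => G.image (· + 1)) := by
  ext H
  simp only [Finset.mem_powerset, Finset.mem_image]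
  constructor
  · intro hH
    refine ⟨H.image (· - 1), ?_, ?_⟩
    · intro x hx
      obtain ⟨y, hy, rfl⟩ := Finset.mem_image.1 hx
      have := Finset.mem_Icc.1 (hH hy)
      exact Finset.mem_Icc.2 (by omega)
    · rw [Finset.image_image]
      ext x
      simp only [Finset.mem_image, Function.comp_apply]
      constructor
      · rintro ⟨y, hy, rfl⟩
        have := Finset.mem_Icc.1 (hH hy)
        have hxy : y - 1 + 1 = y := by omega
        rwa [hxy]
      · intro hx
        have := Finset.mem_Icc.1 (hH hx)
        exact ⟨x, hx, by omega⟩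
  · rintro ⟨G, hG, rfl⟩
    intro x hx
    obtain ⟨y, hy, rfl⟩ := Finset.mem_image.1 hx
    have := Finset.mem_Icc.1 (hG hy)
    exact Finset.mem_Icc.2 (by omega)

lemma up_injective : Function.Injective (fun G : Finset ℕ => G.image (· + 1)) :=
  fun _ _ h => Finset.image_injective (add_left_injective 1) h

lemma wR_succ (p : ℝ) (n m : ℕ) (hm : 1 ≤ m) :
    wR p (n + 1) m = p * wR p n (m - 1) + (1 - p) * wR p n (m + 1) := by
  classical
  have hr : p * wR p n (m - 1) + (1 - p) * wR p n (m + 1)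
      = (1 - p) * wR p n (m + 1) + p * wR p n (m - 1) := by ring
  rw [hr]
  conv_lhs => unfold wR mu
  rw [Icc_one_succ, Finset.powerset_insert, Finset.filter_union, Finset.sum_union ?disj]
  case disj =>
    rw [Finset.disjoint_left]
    intro S hS hS'
    simp only [Finset.mem_filter, Finset.mem_powerset, Finset.mem_image] at hS hS'
    obtain ⟨⟨T, hT, hTe⟩, _⟩ := hS'
    have h1 : (1 : ℕ) ∉ S := fun h => by
      have := hS.1 h; simp only [Finset.mem_Icc] at this; omega
    exact h1 (hTe ▸ Finset.mem_insert_self 1 T)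
  · congr 1
    · -- part without 1 : gives (1-p) * wR p n (m+1)
      rw [powerset_Icc_two, Finset.filter_image, Finset.sum_image
        (fun a _ b _ h => up_injective h)]
      rw [Finset.filter_congr (fun G hG => reaches_up hm (Finset.mem_powerset.1 hG))]
      unfold wR mu
      rw [Finset.mul_sum]
      refine Finset.sum_congr rfl fun G hG => ?_
      have hGsub := Finset.mem_powerset.1 (Finset.mem_filter.1 hG).1
      have hcard : G.card ≤ n := le_trans (Finset.card_le_card hGsub) (by simp)
      rw [Finset.card_image_of_injective _ (add_left_injective 1)]
      have hee : n + 1 - G.card = (n - G.card) + 1 := by omega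
      rw [hee, pow_succ]
      ring
    · -- part with 1 : gives p * wR p n (m-1)
      rw [powerset_Icc_two, Finset.image_image, Finset.filter_image]
      rw [Finset.sum_image ?inj]
      case inj =>
        intro a ha b hb h
        simp only [Function.comp_apply] at h
        have ha' := one_not_mem_up (Finset.mem_powerset.1 (Finset.mem_filter.1 ha).1)
        have hb' := one_not_mem_up (Finset.mem_powerset.1 (Finset.mem_filter.1 hb).1)
        have h2 := congrArg (fun s => Finset.erase s 1) h
        simp only [Finset.erase_insert ha', Finset.erase_insert hb'] at h2
        exact up_injective h2
      rw [Finset.filter_congr (fun G hG => by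
        simpa using reaches_insert_up hm (Finset.mem_powerset.1 hG))]
      unfold wR mu
      rw [Finset.mul_sum]
      refine Finset.sum_congr rfl fun G hG => ?_
      have hGsub := Finset.mem_powerset.1 (Finset.mem_filter.1 hG).1
      have hne := one_not_mem_up hGsub
      simp only [Function.comp_apply]
      rw [Finset.card_insert_of_notMem hne,
        Finset.card_image_of_injective _ (add_left_injective 1)]
      have he : n + 1 - (G.card + 1) = n - G.card := by omega
      rw [he, pow_succ]
      ring
noncomputable section Aux3

open Finset

lemma wR_zero_level (p : ℝ) (n : ℕ) : wR p n 0 = 1 := by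
  unfold wR
  rw [Finset.filter_true_of_mem (fun F _ => reaches_zero n F)]
  exact mu_powerset_full p n

lemma wR_ground_zero (p : ℝ) {m : ℕ} (hm : 1 ≤ m) : wR p 0 m = 0 := by
  unfold wR mu
  rw [Finset.filter_false_of_mem, Finset.sum_empty]
  intro F _
  rw [reaches_iff_pos hm]
  rintro ⟨j, hj1, hj2, _⟩; omega

lemma alpha_identity {p : ℝ} (hp0 : 0 < p) (hp' : p < 1/2) :
    p / (1-p) = p + (1-p) * (p/(1-p) * (p/(1-p))) := by
  have hq : (0:ℝ) < 1 - p := by linarith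
  field_simp
  ring

lemma wR_le_alpha {p : ℝ} (hp0 : 0 < p) (hp' : p < 1/2) :
    ∀ n m : ℕ, wR p n m ≤ (p / (1 - p)) ^ m := by
  have hq : (0:ℝ) < 1 - p := by linarith
  have hα0 : (0:ℝ) ≤ p / (1-p) := by positivity
  intro n
  induction n with
  | zero =>
    intro m
    match m with
    | 0 => rw [wR_zero_level]; norm_num
    | (k+1) => rw [wR_ground_zero p (m := k+1) (by omega)]; positivity
  | succ n ih =>
    intro m
    match m with
    | 0 => rw [wR_zero_level]; norm_num
    | (k+1) =>
      rw [wR_succ p n (k+1) (by omega)]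
      simp only [Nat.add_sub_cancel]
      have e2 : k + 1 + 1 = k + 2 := by omega
      rw [e2]
      have h1 := ih k
      have h2 := ih (k+2)
      have hpq := alpha_identity hp0 hp'
      have hid : p * (p/(1-p))^k + (1-p) * (p/(1-p))^(k+2) = (p/(1-p))^(k+1) := by
        calc p * (p/(1-p))^k + (1-p) * (p/(1-p))^(k+2)
            = (p + (1-p) * (p/(1-p) * (p/(1-p)))) * (p/(1-p))^k := by ring
          _ = (p/(1-p)) * (p/(1-p))^k := by rw [← hpq]
          _ = (p/(1-p))^(k+1) := by ring
      calc p * wR p n k + (1-p) * wR p n (k+2)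
          ≤ p * (p/(1-p))^k + (1-p) * (p/(1-p))^(k+2) := by
            have := mul_le_mul_of_nonneg_left h1 hp0.le
            have := mul_le_mul_of_nonneg_left h2 hq.le
            linarith
        _ = (p/(1-p))^(k+1) := hid

lemma wR_deficit {p : ℝ} (hp0 : 0 < p) (hp' : p < 1/2) :
    ∀ n m : ℕ, 1 ≤ m →
      (p/(1-p))^m - wR p n m ≤
        (p/(1-p)) * (Real.sqrt (p/(1-p)))^(m-1) * (2*Real.sqrt (p*(1-p)))^n := by
  have hq : (0:ℝ) < 1 - p := by linarith
  set α := p/(1-p) with hα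
  set L := Real.sqrt α with hLdef
  set R := 2*Real.sqrt (p*(1-p)) with hRdef
  have hα0 : 0 < α := by positivity
  have hα1 : α < 1 := (div_lt_one hq).2 (by linarith)
  have hL0 : 0 < L := Real.sqrt_pos.2 hα0
  have hL1 : L ≤ 1 := by rw [hLdef, show (1:ℝ) = Real.sqrt 1 by simp]; exact Real.sqrt_le_sqrt (by linarith)
  have hLL : L * L = α := Real.mul_self_sqrt hα0.le
  have hαL : α ≤ L := by nlinarith
  have hR0 : 0 < R := by
    rw [hRdef]
    have : 0 < Real.sqrt (p*(1-p)) := Real.sqrt_pos.2 (by positivity)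
    linarith
  have hqα : (1-p) * α = p := by rw [hα]; field_simp
  have hqL : (1-p) * L = Real.sqrt (p*(1-p)) := by
    have h1 : ((1-p)^2) * α = p * (1-p) := by rw [hα]; field_simp
    calc (1-p) * L = Real.sqrt ((1-p)^2) * Real.sqrt α := by
          rw [Real.sqrt_sq hq.le]
      _ = Real.sqrt ((1-p)^2 * α) := (Real.sqrt_mul (by positivity) _).symm
      _ = Real.sqrt (p * (1-p)) := by rw [h1]
  have hqLR : (1-p) * L ≤ R := by rw [hqL, hRdef]; nlinarith [Real.sqrt_nonneg (p*(1-p))]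
  have hLR : L * R = 2 * p := by
    have h2 : α * (p * (1-p)) = p^2 := by rw [hα]; field_simp
    calc L * R = 2 * (Real.sqrt α * Real.sqrt (p*(1-p))) := by rw [hLdef, hRdef]; ring
      _ = 2 * Real.sqrt (α * (p*(1-p))) := by rw [Real.sqrt_mul hα0.le]
      _ = 2 * p := by rw [h2, Real.sqrt_sq hp0.le]
  intro n
  induction n with
  | zero =>
    intro m hm
    obtain ⟨k, rfl⟩ : ∃ k, m = k + 1 := ⟨m - 1, by omega⟩
    rw [wR_ground_zero p (m := k+1) (by omega), pow_zero, mul_one, sub_zero, Nat.add_sub_cancel]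
    calc α^(k+1) = α * α^k := by ring
      _ ≤ α * L^k := by
          have := pow_le_pow_left₀ hα0.le hαL k
          exact mul_le_mul_of_nonneg_left this hα0.le
  | succ n ih =>
    intro m hm
    obtain ⟨k, rfl⟩ : ∃ k, m = k + 1 := ⟨m - 1, by omega⟩
    rw [wR_succ p n (k+1) (by omega)]
    simp only [Nat.add_sub_cancel]
    match k with
    | 0 =>
      rw [wR_zero_level]
      have d2 := ih 2 (by omega)
      simp only [show (2:ℕ) - 1 = 1 from rfl] at d2
      have h3 : α = p + (1-p) * (α * α) := by
        rw [hα]; exact alpha_identity hp0 hp'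
      have e2 : (0:ℕ)+1+1 = 2 := by omega
      rw [e2]
      have e1 : α^(0+1) - (p * 1 + (1-p) * wR p n 2) = (1-p) * (α^2 - wR p n 2) := by
        linear_combination h3
      rw [e1]
      calc (1-p) * (α^2 - wR p n 2) ≤ (1-p) * (α * L^1 * R^n) := by
            exact mul_le_mul_of_nonneg_left d2 hq.le
        _ ≤ α * L^0 * R^(n+1) := by
            have hRn : (0:ℝ) ≤ R^n := pow_nonneg hR0.le n
            have key := mul_nonneg (mul_nonneg hα0.le hRn) (sub_nonneg.2 hqLR)
            simp only [pow_one, pow_zero, mul_one, pow_succ]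
            nlinarith [key]
    | (j+1) =>
      have e2 : j + 1 + 1 + 1 = j + 3 := by omega
      rw [e2]
      have d1 := ih (j+1) (by omega)
      simp only [Nat.add_sub_cancel] at d1
      have d2 := ih (j+3) (by omega)
      simp only [show j + 3 - 1 = j + 2 from by omega] at d2
      have h3 : α = p + (1-p) * (α * α) := by rw [hα]; exact alpha_identity hp0 hp'
      have hid : p * α^(j+1) + (1-p) * α^(j+3) = α^(j+2) := by
        calc p * α^(j+1) + (1-p) * α^(j+3)
            = (p + (1-p) * (α * α)) * α^(j+1) := by ring
          _ = α * α^(j+1) := by rw [← h3]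
          _ = α^(j+2) := by ring
      have halg : p * (α * L^j * R^n) + (1-p) * (α * L^(j+2) * R^n)
          = α * L^(j+1) * R^(n+1) := by
        have h4 : p + (1-p) * (L*L) = 2*p := by rw [hLL]; linarith [hqα]
        calc p * (α * L^j * R^n) + (1-p) * (α * L^(j+2) * R^n)
            = (p + (1-p) * (L*L)) * (α * L^j * R^n) := by ring
          _ = (2*p) * (α * L^j * R^n) := by rw [h4]
          _ = (L*R) * (α * L^j * R^n) := by rw [hLR]
          _ = α * L^(j+1) * R^(n+1) := by ring
      have e3 : j+1+1 = j+2 := by omega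
      rw [e3]
      have s1 := mul_le_mul_of_nonneg_left d1 hp0.le
      have s2 := mul_le_mul_of_nonneg_left d2 hq.le
      rw [← halg]
      linarith [hid, s1, s2]
noncomputable section Aux4

open Finset

def Apre (ℓ i : ℕ) : Finset (Finset ℕ) :=
  ((Finset.Icc 1 (ℓ+2*i)).powersetCard (ℓ+i)).filter
    fun S => ∀ j ≤ ℓ+2*i, 2 * (S ∩ Finset.Icc 1 j).card ≤ j + ℓ

lemma inter_Icc_small {F : Finset ℕ} {t j : ℕ} (h : j ≤ t) :
    (F ∩ Finset.Icc 1 t) ∩ Finset.Icc 1 j = F ∩ Finset.Icc 1 j := by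
  ext x
  simp only [Finset.mem_inter, Finset.mem_Icc]
  constructor
  · rintro ⟨⟨h1, _⟩, h2⟩; exact ⟨h1, h2⟩
  · rintro ⟨h1, h2⟩; exact ⟨⟨h1, h2.1, le_trans h2.2 h⟩, h2⟩

lemma upT_inter_small {T : Finset ℕ} {t j : ℕ} (hj : j ≤ t) (hT : ∀ x ∈ T, 1 ≤ x) :
    (T.image (· + t)) ∩ Finset.Icc 1 j = ∅ := by
  rw [Finset.eq_empty_iff_forall_notMem]
  intro x hx
  rw [Finset.mem_inter, Finset.mem_image] at hx
  obtain ⟨⟨y, hy, rfl⟩, hmem⟩ := hx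
  rw [Finset.mem_Icc] at hmem
  have := hT y hy
  omega

lemma upT_inter_large {T : Finset ℕ} {t j : ℕ} (hj : t ≤ j) (hT : ∀ x ∈ T, 1 ≤ x) :
    (T.image (· + t)) ∩ Finset.Icc 1 j = (T ∩ Finset.Icc 1 (j - t)).image (· + t) := by
  ext x
  simp only [Finset.mem_inter, Finset.mem_image, Finset.mem_Icc]
  constructor
  · rintro ⟨⟨y, hy, rfl⟩, h1, h2⟩
    exact ⟨y, ⟨hy, hT y hy, by omega⟩, rfl⟩
  · rintro ⟨y, ⟨hy, h1, h2⟩, rfl⟩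
    exact ⟨⟨y, hy, rfl⟩, by omega, by omega⟩

lemma disj_S_upT {S T : Finset ℕ} {t : ℕ} (hS : S ⊆ Finset.Icc 1 t)
    (hT : ∀ x ∈ T, 1 ≤ x) :
    Disjoint S (T.image (· + t)) := by
  rw [Finset.disjoint_left]
  intro x hx hx'
  obtain ⟨y, hy, rfl⟩ := Finset.mem_image.1 hx'
  have := Finset.mem_Icc.1 (hS hx)
  have := hT y hy
  omega

lemma inter_union_sdiff_self (F A : Finset ℕ) : F ∩ A ∪ F \ A = F := by
  ext x
  simp only [Finset.mem_union, Finset.mem_inter, Finset.mem_sdiff]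
  tauto

lemma down_up {n t : ℕ} {F : Finset ℕ} (hF : F ⊆ Finset.Icc 1 n) :
    ((F \ Finset.Icc 1 t).image (· - t)).image (· + t) = F \ Finset.Icc 1 t := by
  rw [Finset.image_image]
  ext x
  constructor
  · intro hx
    obtain ⟨y, hy, hxy⟩ := Finset.mem_image.1 hx
    obtain ⟨hyF, hyI⟩ := Finset.mem_sdiff.1 hy
    have h1 := Finset.mem_Icc.1 (hF hyF)
    have h2 : ¬(1 ≤ y ∧ y ≤ t) := fun h => hyI (Finset.mem_Icc.2 h)
    simp only [Function.comp_apply] at hxy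
    have hx2 : x = y := by omega
    rw [hx2]; exact hy
  · intro hx
    obtain ⟨hxF, hxI⟩ := Finset.mem_sdiff.1 hx
    have h1 := Finset.mem_Icc.1 (hF hxF)
    have h2 : ¬(1 ≤ x ∧ x ≤ t) := fun h => hxI (Finset.mem_Icc.2 h)
    refine Finset.mem_image.2 ⟨x, hx, ?_⟩
    show x - t + t = x
    omega

lemma down_sub {n t : ℕ} {F : Finset ℕ} (hF : F ⊆ Finset.Icc 1 n) :
    (F \ Finset.Icc 1 t).image (· - t) ⊆ Finset.Icc 1 (n - t) := by
  intro x hx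
  obtain ⟨y, hy, rfl⟩ := Finset.mem_image.1 hx
  obtain ⟨hyF, hyI⟩ := Finset.mem_sdiff.1 hy
  have h1 := Finset.mem_Icc.1 (hF hyF)
  have h2 : ¬(1 ≤ y ∧ y ≤ t) := fun h => hyI (Finset.mem_Icc.2 h)
  exact Finset.mem_Icc.2 ⟨by omega, by omega⟩

lemma down_card {t : ℕ} {X : Finset ℕ} (hX : ∀ x ∈ X, t < x) :
    (X.image (· - t)).card = X.card :=
  Finset.card_image_of_injOn (fun a ha b hb h => by
    have h1 := hX a ha; have h2 := hX b hb
    have h' : a - t = b - t := h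
    omega)

lemma union_card {t : ℕ} {S T : Finset ℕ} (hS : S ⊆ Finset.Icc 1 t)
    (hT : ∀ x ∈ T, 1 ≤ x) :
    (S ∪ T.image (· + t)).card = S.card + T.card := by
  rw [Finset.card_union_of_disjoint (disj_S_upT hS hT),
    Finset.card_image_of_injective _ (add_left_injective t)]

lemma union_inter_t {t : ℕ} {S T : Finset ℕ} (hS : S ⊆ Finset.Icc 1 t)
    (hT : ∀ x ∈ T, 1 ≤ x) :
    (S ∪ T.image (· + t)) ∩ Finset.Icc 1 t = S := by
  rw [Finset.union_inter_distrib_right, upT_inter_small (le_refl t) hT, Finset.union_empty,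
    Finset.inter_eq_left.2 hS]

lemma union_sdiff_t {t : ℕ} {S T : Finset ℕ} (hS : S ⊆ Finset.Icc 1 t)
    (hT : ∀ x ∈ T, 1 ≤ x) :
    (S ∪ T.image (· + t)) \ Finset.Icc 1 t = T.image (· + t) := by
  ext x
  simp only [Finset.mem_sdiff, Finset.mem_union]
  constructor
  · rintro ⟨h1 | h1, h2⟩
    · exact absurd (hS h1) h2
    · exact h1
  · intro hx
    obtain ⟨y, hy, rfl⟩ := Finset.mem_image.1 hx
    have := hT y hy
    refine ⟨Or.inr hx, fun h => ?_⟩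
    have := Finset.mem_Icc.1 h
    omega

lemma bar_eq (n ℓ i : ℕ) (hn : ℓ + 2*i ≤ n) :
    (Fhat n ℓ ∪ Fddot n ℓ) ∩ FF n ℓ i
      = (Finset.Icc 1 n).powerset.filter
          (fun F => ¬ Reaches n (ℓ+1) F ∧ (F ∩ Finset.Icc 1 (ℓ+2*i)).card = ℓ+i) := by
  ext F
  simp only [Fhat, Fddot, FF, Finset.mem_inter, Finset.mem_union, Finset.mem_filter,
    Finset.mem_powerset]
  constructor
  · rintro ⟨h1, hsub, hcard⟩
    have hR : ¬ Reaches n (ℓ+1) F := by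
      rcases h1 with ⟨_, h, _⟩ | ⟨_, h, _⟩ <;> exact h
    refine ⟨hsub, hR, ?_⟩
    have h2 : ¬ (ℓ + 2*i + (ℓ+1) ≤ 2 * (F ∩ Finset.Icc 1 (ℓ+2*i)).card) :=
      fun h => hR ⟨ℓ+2*i, hn, h⟩
    omega
  · rintro ⟨hsub, hR, hc⟩
    have ht : (ℓ+2*i) ∈ (Finset.range (n+1)).filter
        (fun j => 2*(F ∩ Finset.Icc 1 j).card = j + ℓ) := by
      simp only [Finset.mem_filter, Finset.mem_range]
      exact ⟨by omega, by omega⟩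
    have hpos : 0 < hitCount n ℓ F := by
      unfold hitCount
      exact Finset.card_pos.2 ⟨_, ht⟩
    refine ⟨?_, hsub, by omega⟩
    rcases Nat.lt_or_ge (hitCount n ℓ F) 2 with h | h
    · exact Or.inl ⟨hsub, hR, by omega⟩
    · exact Or.inr ⟨hsub, hR, h⟩

lemma not_reaches_iff {n m : ℕ} (hm : 1 ≤ m) (F : Finset ℕ) :
    ¬ Reaches n m F ↔ ∀ j, 1 ≤ j → j ≤ n → 2 * (F ∩ Finset.Icc 1 j).card < j + m := by
  rw [reaches_iff_pos hm]
  push_neg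
  constructor
  · intro h j h1 h2; exact h j h1 h2
  · intro h j h1 h2; exact h j h1 h2

lemma reaches_split {n ℓ i : ℕ} (ht : ℓ + 2*i ≤ n) {S T : Finset ℕ}
    (hS : S ⊆ Finset.Icc 1 (ℓ+2*i)) (hScard : S.card = ℓ+i)
    (hT : T ⊆ Finset.Icc 1 (n - (ℓ+2*i))) :
    ¬ Reaches n (ℓ+1) (S ∪ T.image (· + (ℓ+2*i)))
      ↔ (∀ j ≤ ℓ+2*i, 2 * (S ∩ Finset.Icc 1 j).card ≤ j + ℓ)
          ∧ ¬ Reaches (n - (ℓ+2*i)) 1 T := by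
  have hT1 : ∀ x ∈ T, 1 ≤ x := fun x hx => (Finset.mem_Icc.1 (hT hx)).1
  have hcard_small : ∀ j, j ≤ ℓ+2*i →
      ((S ∪ T.image (· + (ℓ+2*i))) ∩ Finset.Icc 1 j).card = (S ∩ Finset.Icc 1 j).card := by
    intro j hj
    rw [Finset.union_inter_distrib_right, upT_inter_small hj hT1, Finset.union_empty]
  have hcard_large : ∀ j, ℓ+2*i ≤ j →
      ((S ∪ T.image (· + (ℓ+2*i))) ∩ Finset.Icc 1 j).card
        = (ℓ+i) + (T ∩ Finset.Icc 1 (j - (ℓ+2*i))).card := by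
    intro j hj
    rw [Finset.union_inter_distrib_right, upT_inter_large hj hT1]
    have hsub2 : S ∩ Finset.Icc 1 j = S := by
      refine Finset.inter_eq_left.2 (fun x hx => ?_)
      have := Finset.mem_Icc.1 (hS hx)
      exact Finset.mem_Icc.2 ⟨this.1, by omega⟩
    rw [hsub2, Finset.card_union_of_disjoint
      (disj_S_upT hS (fun x hx => hT1 x (Finset.mem_inter.1 hx).1)),
      Finset.card_image_of_injective _ (add_left_injective _), hScard]
  constructor
  · intro hR
    rw [not_reaches_iff (by omega)] at hR
    constructor
    · intro j hj
      rcases Nat.eq_zero_or_pos j with rfl | hj1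
      · rw [Icc_one_zero, Finset.inter_empty]; simp
      · have h3 := hR j hj1 (by omega)
        rw [hcard_small j hj] at h3
        omega
    · rw [not_reaches_iff (by omega)]
      intro j' hj1 hj2
      have h3 := hR (ℓ+2*i + j') (by omega) (by omega)
      rw [hcard_large _ (by omega)] at h3
      have e : ℓ+2*i + j' - (ℓ+2*i) = j' := by omega
      rw [e] at h3
      omega
  · rintro ⟨h1, h2⟩
    rw [not_reaches_iff (by omega)]
    rw [not_reaches_iff (by omega)] at h2
    intro j hj1 hj2
    rcases le_or_gt j (ℓ+2*i) with hle | hlt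
    · rw [hcard_small j hle]
      have h3 := h1 j hle
      omega
    · rw [hcard_large j hlt.le]
      have h3 := h2 (j - (ℓ+2*i)) (by omega) (by omega)
      omega

lemma mu_bar (p : ℝ) (n ℓ i : ℕ) (ht : ℓ + 2*i ≤ n) :
    mu n p ((Finset.Icc 1 n).powerset.filter
      (fun F => ¬ Reaches n (ℓ+1) F ∧ (F ∩ Finset.Icc 1 (ℓ+2*i)).card = ℓ+i))
    = (Apre ℓ i).card * (p^(ℓ+i) * (1-p)^i)
        * mu (n - (ℓ+2*i)) p
            (((Finset.Icc 1 (n - (ℓ+2*i))).powerset).filter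
              (fun T => ¬ Reaches (n - (ℓ+2*i)) 1 T)) := by
  classical
  unfold mu
  have key : (∑ F ∈ (Finset.Icc 1 n).powerset.filter
        (fun F => ¬ Reaches n (ℓ+1) F ∧ (F ∩ Finset.Icc 1 (ℓ+2*i)).card = ℓ+i),
        p^F.card * (1-p)^(n - F.card))
      = ∑ ST ∈ (Apre ℓ i) ×ˢ (((Finset.Icc 1 (n - (ℓ+2*i))).powerset).filter
          (fun T => ¬ Reaches (n - (ℓ+2*i)) 1 T)),
          (p^(ℓ+i) * (1-p)^i) * (p^(ST.2.card) * (1-p)^((n - (ℓ+2*i)) - ST.2.card)) := by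
    refine Finset.sum_nbij'
      (fun F => ((F ∩ Finset.Icc 1 (ℓ+2*i) : Finset ℕ),
        ((F \ Finset.Icc 1 (ℓ+2*i)).image (· - (ℓ+2*i)) : Finset ℕ)))
      (fun ST => ST.1 ∪ ST.2.image (· + (ℓ+2*i))) ?_ ?_ ?_ ?_ ?_
    · -- hi
      intro F hF
      obtain ⟨hFsub, hQ1, hQ2⟩ :
          F ⊆ Finset.Icc 1 n ∧ ¬ Reaches n (ℓ+1) F
            ∧ (F ∩ Finset.Icc 1 (ℓ+2*i)).card = ℓ+i := by
        have := Finset.mem_filter.1 hF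
        exact ⟨Finset.mem_powerset.1 this.1, this.2.1, this.2.2⟩
      have hTsub := down_sub (t := ℓ+2*i) hFsub
      have hrec : (F ∩ Finset.Icc 1 (ℓ+2*i))
          ∪ ((F \ Finset.Icc 1 (ℓ+2*i)).image (· - (ℓ+2*i))).image (· + (ℓ+2*i)) = F := by
        rw [down_up hFsub, inter_union_sdiff_self]
      have hsplit := (reaches_split ht Finset.inter_subset_right hQ2 hTsub).1
        (by rwa [hrec])
      refine Finset.mem_product.2 ⟨?_, ?_⟩
      · exact Finset.mem_filter.2
          ⟨Finset.mem_powersetCard.2 ⟨Finset.inter_subset_right, hQ2⟩, hsplit.1⟩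
      · exact Finset.mem_filter.2 ⟨Finset.mem_powerset.2 hTsub, hsplit.2⟩
    · -- hj
      intro ST hST
      obtain ⟨hS, hT⟩ := Finset.mem_product.1 hST
      obtain ⟨hSpc, hSw⟩ := Finset.mem_filter.1 hS
      obtain ⟨hSsub, hScard⟩ := Finset.mem_powersetCard.1 hSpc
      obtain ⟨hTpw, hTR⟩ := Finset.mem_filter.1 hT
      have hTsub := Finset.mem_powerset.1 hTpw
      have hT1 : ∀ x ∈ ST.2, 1 ≤ x := fun x hx => (Finset.mem_Icc.1 (hTsub hx)).1
      refine Finset.mem_filter.2 ⟨Finset.mem_powerset.2 ?_, ?_, ?_⟩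
      · intro x hx
        rcases Finset.mem_union.1 hx with h | h
        · have := Finset.mem_Icc.1 (hSsub h)
          exact Finset.mem_Icc.2 ⟨this.1, by omega⟩
        · obtain ⟨y, hy, rfl⟩ := Finset.mem_image.1 h
          have := Finset.mem_Icc.1 (hTsub hy)
          exact Finset.mem_Icc.2 ⟨by omega, by omega⟩
      · exact (reaches_split ht hSsub hScard hTsub).2 ⟨hSw, hTR⟩
      · rw [union_inter_t hSsub hT1]
        exact hScard
    · -- left inverse
      intro F hF
      have hFsub := Finset.mem_powerset.1 (Finset.mem_filter.1 hF).1
      simp only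
      rw [down_up hFsub, inter_union_sdiff_self]
    · -- right inverse
      intro ST hST
      obtain ⟨hS, hT⟩ := Finset.mem_product.1 hST
      obtain ⟨hSpc, _⟩ := Finset.mem_filter.1 hS
      obtain ⟨hSsub, _⟩ := Finset.mem_powersetCard.1 hSpc
      have hTsub := Finset.mem_powerset.1 (Finset.mem_filter.1 hT).1
      have hT1 : ∀ x ∈ ST.2, 1 ≤ x := fun x hx => (Finset.mem_Icc.1 (hTsub hx)).1
      have h1 := union_inter_t (T := ST.2) hSsub hT1
      have h2 := union_sdiff_t (T := ST.2) hSsub hT1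
      rw [h1, h2, Finset.image_image]
      have h3 : ST.2.image ((· - (ℓ+2*i)) ∘ (· + (ℓ+2*i))) = ST.2 := by
        refine Finset.image_congr ?_ |>.trans Finset.image_id
        intro x _
        simp only [Function.comp_apply, id_eq]
        omega
      rw [h3]
    · -- weights
      intro F hF
      obtain ⟨hFpw, hQ1, hQ2⟩ := Finset.mem_filter.1 hF
      have hFsub := Finset.mem_powerset.1 hFpw
      simp only
      have hmore : ∀ x ∈ F \ Finset.Icc 1 (ℓ+2*i), (ℓ+2*i) < x := by
        intro x hx
        obtain ⟨hxF, hxI⟩ := Finset.mem_sdiff.1 hx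
        have h1 := Finset.mem_Icc.1 (hFsub hxF)
        have h2 : ¬(1 ≤ x ∧ x ≤ ℓ+2*i) := fun h => hxI (Finset.mem_Icc.2 h)
        omega
      rw [down_card hmore]
      have hsplitc : F.card = (ℓ+i) + (F \ Finset.Icc 1 (ℓ+2*i)).card := by
        rw [← hQ2, Finset.card_inter_add_card_sdiff]
      have hb : (F \ Finset.Icc 1 (ℓ+2*i)).card ≤ n - (ℓ+2*i) := by
        have := Finset.card_le_card (down_sub (t := ℓ+2*i) hFsub)
        rw [down_card hmore] at this
        simpa using this
      have hcn : F.card ≤ n := by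
        have := Finset.card_le_card hFsub
        simpa using this
      have e1 : n - F.card = i + ((n - (ℓ+2*i)) - (F \ Finset.Icc 1 (ℓ+2*i)).card) := by
        omega
      rw [hsplitc]
      have e2 : n - (ℓ + i + (F \ Finset.Icc 1 (ℓ+2*i)).card)
          = i + ((n - (ℓ+2*i)) - (F \ Finset.Icc 1 (ℓ+2*i)).card) := by omega
      rw [e2, pow_add, pow_add]
      ring
  rw [key, Finset.sum_product]
  simp only [Prod.snd]
  rw [Finset.sum_const, nsmul_eq_mul, ← Finset.mul_sum]
  ring

end Aux4
noncomputable section Aux5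

open Finset
open scoped Classical

lemma card_step (S : Finset ℕ) (j : ℕ) :
    (S ∩ Finset.Icc 1 (j+1)).card ≤ (S ∩ Finset.Icc 1 j).card + 1 := by
  have h : S ∩ Finset.Icc 1 (j+1) ⊆ insert (j+1) (S ∩ Finset.Icc 1 j) := by
    intro x hx
    obtain ⟨h1, h2⟩ := Finset.mem_inter.1 hx
    have h3 := Finset.mem_Icc.1 h2
    rcases Nat.eq_or_lt_of_le h3.2 with he | hlt
    · exact Finset.mem_insert.2 (Or.inl he)
    · exact Finset.mem_insert.2
        (Or.inr (Finset.mem_inter.2 ⟨h1, Finset.mem_Icc.2 ⟨h3.1, by omega⟩⟩))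
  exact le_trans (Finset.card_le_card h) (Finset.card_insert_le _ _)

def hitIdx (ℓ t : ℕ) (S : Finset ℕ) : ℕ :=
  if h : ∃ j, j ≤ t ∧ j + ℓ + 1 ≤ 2 * (S ∩ Finset.Icc 1 j).card then Nat.find h else 0

def reflS (ℓ t : ℕ) (S : Finset ℕ) : Finset ℕ :=
  (S ∩ Finset.Icc 1 (hitIdx ℓ t S)) ∪ (Finset.Icc (hitIdx ℓ t S + 1) t \ S)

lemma hitIdx_spec {ℓ t : ℕ} {S : Finset ℕ}
    (hex : ∃ j, j ≤ t ∧ j + ℓ + 1 ≤ 2 * (S ∩ Finset.Icc 1 j).card) :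
    hitIdx ℓ t S ≤ t
    ∧ 2 * (S ∩ Finset.Icc 1 (hitIdx ℓ t S)).card = hitIdx ℓ t S + ℓ + 1
    ∧ 1 ≤ hitIdx ℓ t S
    ∧ ∀ j < hitIdx ℓ t S, ¬(j ≤ t ∧ j + ℓ + 1 ≤ 2 * (S ∩ Finset.Icc 1 j).card) := by
  unfold hitIdx
  rw [dif_pos hex]
  have hspec := Nat.find_spec hex
  have hmin : ∀ j < Nat.find hex, ¬(j ≤ t ∧ j + ℓ + 1 ≤ 2 * (S ∩ Finset.Icc 1 j).card) :=
    fun j hj => Nat.find_min hex hj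
  have h1 : 1 ≤ Nat.find hex := by
    by_contra h0
    have hz : Nat.find hex = 0 := by omega
    have := hspec.2
    rw [hz, Icc_one_zero, Finset.inter_empty, Finset.card_empty] at this
    omega
  refine ⟨hspec.1, ?_, h1, hmin⟩
  have hle : Nat.find hex - 1 ≤ t := by omega
  have h2 : ¬(Nat.find hex - 1 + ℓ + 1 ≤ 2 * (S ∩ Finset.Icc 1 (Nat.find hex - 1)).card) :=
    fun hh => hmin (Nat.find hex - 1) (by omega) ⟨hle, hh⟩
  have h3 := card_step S (Nat.find hex - 1)
  have e : Nat.find hex - 1 + 1 = Nat.find hex := by omega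
  rw [e] at h3
  have := hspec.2
  omega

lemma refl_main {ℓ t : ℕ} {S : Finset ℕ} (hsub : S ⊆ Finset.Icc 1 t)
    (hex : ∃ j, j ≤ t ∧ j + ℓ + 1 ≤ 2 * (S ∩ Finset.Icc 1 j).card) :
    reflS ℓ t S ⊆ Finset.Icc 1 t
    ∧ (reflS ℓ t S).card + S.card = t + ℓ + 1
    ∧ (∃ j ≤ t, j + ℓ + 1 ≤ 2 * (reflS ℓ t S ∩ Finset.Icc 1 j).card)
    ∧ reflS ℓ t (reflS ℓ t S) = S := by
  obtain ⟨hj0t, heq, hj01, hmin⟩ := hitIdx_spec hex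
  set j₀ := hitIdx ℓ t S with hj₀
  -- prefix equality
  have hpre : ∀ j ≤ j₀, reflS ℓ t S ∩ Finset.Icc 1 j = S ∩ Finset.Icc 1 j := by
    intro j hj
    unfold reflS
    rw [← hj₀, Finset.union_inter_distrib_right, inter_Icc_small hj]
    have h2 : (Finset.Icc (j₀+1) t \ S) ∩ Finset.Icc 1 j = ∅ := by
      rw [Finset.eq_empty_iff_forall_notMem]
      intro x hx
      obtain ⟨hx1, hx2⟩ := Finset.mem_inter.1 hx
      have h3 := Finset.mem_Icc.1 (Finset.mem_sdiff.1 hx1).1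
      have h4 := Finset.mem_Icc.1 hx2
      omega
    rw [h2, Finset.union_empty]
  -- partition of S
  have hpart : (S ∩ Finset.Icc 1 j₀) ∪ (S ∩ Finset.Icc (j₀+1) t) = S := by
    ext x
    simp only [Finset.mem_union, Finset.mem_inter, Finset.mem_Icc]
    constructor
    · rintro (⟨h, _⟩ | ⟨h, _⟩) <;> exact h
    · intro hx
      have := Finset.mem_Icc.1 (hsub hx)
      rcases le_or_gt x j₀ with h | h
      · exact Or.inl ⟨hx, by omega⟩
      · exact Or.inr ⟨hx, by omega⟩
  have hdisj : Disjoint (S ∩ Finset.Icc 1 j₀) (S ∩ Finset.Icc (j₀+1) t) := by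
    rw [Finset.disjoint_left]
    intro x hx hx'
    have h1 := Finset.mem_Icc.1 (Finset.mem_inter.1 hx).2
    have h2 := Finset.mem_Icc.1 (Finset.mem_inter.1 hx').2
    omega
  have hScard : (S ∩ Finset.Icc 1 j₀).card + (S ∩ Finset.Icc (j₀+1) t).card = S.card := by
    rw [← Finset.card_union_of_disjoint hdisj, hpart]
  -- disjointness of the two parts of reflS
  have hdisj2 : Disjoint (S ∩ Finset.Icc 1 j₀) (Finset.Icc (j₀+1) t \ S) := by
    rw [Finset.disjoint_left]
    intro x hx hx'
    have h1 := Finset.mem_Icc.1 (Finset.mem_inter.1 hx).2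
    have h2 := Finset.mem_Icc.1 (Finset.mem_sdiff.1 hx').1
    omega
  have hcard2 : (Finset.Icc (j₀+1) t \ S).card + (Finset.Icc (j₀+1) t ∩ S).card
      = (Finset.Icc (j₀+1) t).card := Finset.card_sdiff_add_card_inter _ _
  have hIccCard : (Finset.Icc (j₀+1) t).card = t - j₀ := by
    rw [Nat.card_Icc]; omega
  have hIS : Finset.Icc (j₀+1) t ∩ S = S ∩ Finset.Icc (j₀+1) t := Finset.inter_comm _ _
  have hrcard : (reflS ℓ t S).card + S.card = t + ℓ + 1 := by
    unfold reflS
    rw [← hj₀, Finset.card_union_of_disjoint hdisj2]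
    rw [hIS] at hcard2
    -- arithmetic: (c0 + ((t-j₀) - s2)) + (c0 + s2) = t + ℓ + 1 given 2c0 = j₀+ℓ+1
    omega
  -- subset
  have hrsub : reflS ℓ t S ⊆ Finset.Icc 1 t := by
    unfold reflS
    rw [← hj₀]
    intro x hx
    rcases Finset.mem_union.1 hx with h | h
    · exact hsub (Finset.mem_inter.1 h).1
    · have h1 := Finset.mem_Icc.1 (Finset.mem_sdiff.1 h).1
      exact Finset.mem_Icc.2 ⟨by omega, by omega⟩
  -- violation at j₀
  have hviol : ∃ j ≤ t, j + ℓ + 1 ≤ 2 * (reflS ℓ t S ∩ Finset.Icc 1 j).card := by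
    refine ⟨j₀, hj0t, ?_⟩
    rw [hpre j₀ le_rfl]
    omega
  refine ⟨hrsub, hrcard, hviol, ?_⟩
  -- recovery : reflS of reflS is S
  have hex2 : ∃ j, j ≤ t ∧ j + ℓ + 1 ≤ 2 * (reflS ℓ t S ∩ Finset.Icc 1 j).card := by
    obtain ⟨j, hj1, hj2⟩ := hviol
    exact ⟨j, hj1, hj2⟩
  have hidx2 : hitIdx ℓ t (reflS ℓ t S) = j₀ := by
    unfold hitIdx
    rw [dif_pos hex2]
    have hub : Nat.find hex2 ≤ j₀ := Nat.find_le ⟨hj0t, by rw [hpre j₀ le_rfl]; omega⟩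
    have hlb : ¬ (Nat.find hex2 < j₀) := by
      intro hlt
      have hspec2 := Nat.find_spec hex2
      rw [hpre _ (by omega)] at hspec2
      exact hmin _ hlt ⟨hspec2.1, hspec2.2⟩
    omega
  have hback : Finset.Icc (j₀+1) t \ reflS ℓ t S = S ∩ Finset.Icc (j₀+1) t := by
    ext x
    simp only [Finset.mem_sdiff, Finset.mem_inter]
    constructor
    · rintro ⟨hx1, hx2⟩
      refine ⟨?_, hx1⟩
      by_contra hxS
      exact hx2 (Finset.mem_union.2 (Or.inr (Finset.mem_sdiff.2 ⟨hx1, hxS⟩)))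
    · rintro ⟨hxS, hxI⟩
      refine ⟨hxI, fun hx => ?_⟩
      rcases Finset.mem_union.1 hx with h | h
      · have h1 := Finset.mem_Icc.1 (Finset.mem_inter.1 h).2
        have h2 := Finset.mem_Icc.1 hxI
        omega
      · exact (Finset.mem_sdiff.1 h).2 hxS
  show (reflS ℓ t S ∩ Finset.Icc 1 (hitIdx ℓ t (reflS ℓ t S)))
      ∪ (Finset.Icc (hitIdx ℓ t (reflS ℓ t S) + 1) t \ reflS ℓ t S) = S
  rw [hidx2, hpre j₀ le_rfl, hback, hpart]

end Aux5
noncomputable section Aux6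

open Finset
open scoped Classical

lemma apre_card_le (ℓ i : ℕ) (hl : 1 ≤ ℓ) :
    ((Apre ℓ i).card : ℝ)
      ≤ (Nat.choose (ℓ + 2*i) i : ℝ) * ((ℓ + 1 : ℝ) / ((ℓ : ℝ) + (i : ℝ) + 1)) := by
  rcases Nat.eq_zero_or_pos i with rfl | hi
  · -- i = 0
    have h1 : (Apre ℓ 0).card ≤ ((Finset.Icc 1 (ℓ+2*0)).powersetCard (ℓ+0)).card :=
      Finset.card_filter_le _ _
    rw [Finset.card_powersetCard] at h1
    simp only [Nat.mul_zero, Nat.add_zero] at h1 ⊢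
    rw [Nat.card_Icc] at h1
    simp only [Nat.add_sub_cancel, Nat.choose_self] at h1
    have hcast : ((Apre ℓ 0).card : ℝ) ≤ 1 := by exact_mod_cast h1
    have hne : ((ℓ:ℝ) + 0 + 1) ≠ 0 := by positivity
    have hval : (Nat.choose ℓ 0 : ℝ)
        * ((ℓ + 1 : ℝ) / ((ℓ : ℝ) + ((0:ℕ) : ℝ) + 1)) = 1 := by
      rw [Nat.choose_zero_right]
      push_cast
      rw [one_mul, div_eq_one_iff_eq hne]
      ring
    rw [hval]
    exact hcast
  · -- i ≥ 1
    have hit : i ≤ ℓ + 2*i := by omega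
    -- Bad family
    set t := ℓ + 2*i with htd
    set Bad := ((Finset.Icc 1 t).powersetCard (ℓ+i)).filter
      (fun S => ¬ ∀ j ≤ t, 2 * (S ∩ Finset.Icc 1 j).card ≤ j + ℓ) with hBadd
    have hsplitcard : (Apre ℓ i).card + Bad.card
        = ((Finset.Icc 1 t).powersetCard (ℓ+i)).card :=
      Finset.card_filter_add_card_filter_not _
    have hPC : ((Finset.Icc 1 t).powersetCard (ℓ+i)).card = Nat.choose t (ℓ+i) := by
      rw [Finset.card_powersetCard, Nat.card_Icc, Nat.add_sub_cancel]
    -- injection from powersetCard (ℓ+i+1) into Bad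
    have hinj : Nat.choose t (ℓ+i+1) ≤ Bad.card := by
      have hdom : ((Finset.Icc 1 t).powersetCard (ℓ+i+1)).card = Nat.choose t (ℓ+i+1) := by
        rw [Finset.card_powersetCard, Nat.card_Icc, Nat.add_sub_cancel]
      rw [← hdom]
      refine Finset.card_le_card_of_injOn (reflS ℓ t) ?_ ?_
      · intro S hS
        obtain ⟨hsub, hcard⟩ := Finset.mem_powersetCard.1 hS
        have hex : ∃ j, j ≤ t ∧ j + ℓ + 1 ≤ 2 * (S ∩ Finset.Icc 1 j).card := by
          refine ⟨t, le_rfl, ?_⟩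
          rw [Finset.inter_eq_left.2 hsub, hcard]
          omega
        obtain ⟨hrsub, hrcard, hviol, _⟩ := refl_main hsub hex
        refine Finset.mem_filter.2 ⟨Finset.mem_powersetCard.2 ⟨hrsub, by omega⟩, ?_⟩
        intro hall
        obtain ⟨j, hj1, hj2⟩ := hviol
        have := hall j hj1
        omega
      · intro S1 hS1 S2 hS2 hf
        obtain ⟨hsub1, hcard1⟩ := Finset.mem_powersetCard.1 (Finset.mem_coe.1 hS1)
        obtain ⟨hsub2, hcard2⟩ := Finset.mem_powersetCard.1 (Finset.mem_coe.1 hS2)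
        have hex1 : ∃ j, j ≤ t ∧ j + ℓ + 1 ≤ 2 * (S1 ∩ Finset.Icc 1 j).card := by
          refine ⟨t, le_rfl, ?_⟩
          rw [Finset.inter_eq_left.2 hsub1, hcard1]
          omega
        have hex2 : ∃ j, j ≤ t ∧ j + ℓ + 1 ≤ 2 * (S2 ∩ Finset.Icc 1 j).card := by
          refine ⟨t, le_rfl, ?_⟩
          rw [Finset.inter_eq_left.2 hsub2, hcard2]
          omega
        have hr1 := (refl_main hsub1 hex1).2.2.2
        have hr2 := (refl_main hsub2 hex2).2.2.2
        rw [← hr1, ← hr2, hf]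
    -- choose symmetry
    have hsym1 : Nat.choose t (ℓ+i) = Nat.choose t i := by
      have h := Nat.choose_symm (n := t) (k := i) (by omega)
      rw [show t - i = ℓ + i from by omega] at h
      exact h
    have hsym2 : Nat.choose t (ℓ+i+1) = Nat.choose t (i-1) := by
      have h := Nat.choose_symm (n := t) (k := i-1) (by omega)
      rw [show t - (i-1) = ℓ + i + 1 from by omega] at h
      exact h
    have hid : Nat.choose t i * i = Nat.choose t (i-1) * (ℓ + i + 1) := by
      have h := Nat.choose_succ_right_eq t (i-1)
      rw [show i - 1 + 1 = i from by omega, show t - (i-1) = ℓ + i + 1 from by omega] at h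
      exact h
    -- pass to the reals
    have hAB : (Apre ℓ i).card + Bad.card = Nat.choose t i := by
      rw [hsplitcard, hPC, hsym1]
    have hBge : Nat.choose t (i-1) ≤ Bad.card := by rw [← hsym2]; exact hinj
    have hle : ((Apre ℓ i).card : ℝ) ≤ (Nat.choose t i : ℝ) - (Nat.choose t (i-1) : ℝ) := by
      have h1 : ((Apre ℓ i).card : ℝ) + (Bad.card : ℝ) = (Nat.choose t i : ℝ) := by
        exact_mod_cast congrArg (fun x : ℕ => (x : ℝ)) hAB
      have h2 : (Nat.choose t (i-1) : ℝ) ≤ (Bad.card : ℝ) := by exact_mod_cast hBge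
      linarith
    refine le_trans hle ?_
    have hidR : (Nat.choose t i : ℝ) * (i : ℝ)
        = (Nat.choose t (i-1) : ℝ) * ((ℓ:ℝ) + (i:ℝ) + 1) := by
      have := congrArg (fun x : ℕ => (x : ℝ)) hid
      push_cast at this
      convert this using 2 <;> push_cast <;> ring
    have hden : (0:ℝ) < (ℓ:ℝ) + (i:ℝ) + 1 := by positivity
    rw [mul_div_assoc', le_div_iff₀ hden]
    linear_combination hidR

lemma mu_not_reach (p : ℝ) (r : ℕ) :
    mu r p (((Finset.Icc 1 r).powerset).filter (fun T => ¬ Reaches r 1 T))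
      = 1 - wR p r 1 := by
  have h := Finset.sum_filter_add_sum_filter_not ((Finset.Icc 1 r).powerset)
    (fun T => Reaches r 1 T) (fun F => p ^ F.card * (1-p) ^ (r - F.card))
  have h2 := mu_powerset_full p r
  unfold mu at *
  unfold wR mu
  linarith

end Aux6
set_option maxHeartbeats 2000000 in
/-- the key weight estimate `μ_p(tilde F^ℓ ∪ bar F^ℓ_i) < 1.001 f(ℓ,i,p)`. -/
theorem statement_11 (p : ℝ) (hp : 0 < p) (hp' : p < 1 / 2) (ℓ i : ℕ) (hl : 1 ≤ ℓ) :
    ∃ n₀ : ℕ, ∀ n : ℕ, n₀ < n →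
      mu n p (Ftilde n ℓ ∪ ((Fhat n ℓ ∪ Fddot n ℓ) ∩ FF n ℓ i)) <
        1.001 * fLP ℓ i p := by
  classical
  have hq : (0:ℝ) < 1 - p := by linarith
  have hp1 : p < 1 := by linarith
  have hα0 : (0:ℝ) < p / (1 - p) := div_pos hp hq
  have hα1 : p / (1 - p) < 1 := (div_lt_one hq).2 (by linarith)
  have hρ0 : (0:ℝ) < 2 * Real.sqrt (p * (1 - p)) := by
    have := Real.sqrt_pos.2 (mul_pos hp hq)
    linarith
  have hρ1 : 2 * Real.sqrt (p * (1 - p)) < 1 := by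
    have h4 : p * (1 - p) < (1/2)^2 := by nlinarith
    have h5 := Real.sqrt_lt_sqrt (by positivity) h4
    rw [Real.sqrt_sq (by norm_num : (0:ℝ) ≤ 1/2)] at h5
    linarith
  have hc0 : (0:ℝ) < p^(ℓ+i) * (1-p)^i := by positivity
  have hN0 : (0:ℝ) ≤ (Nat.choose (ℓ+2*i) i : ℝ) * ((ℓ+1:ℝ)/((ℓ:ℝ)+(i:ℝ)+1)) := by positivity
  have hA0 : (0:ℝ) < (p/(1-p))^(ℓ+1) := pow_pos hα0 _
  have hNcα : (0:ℝ) ≤ ((Nat.choose (ℓ+2*i) i : ℝ) * ((ℓ+1:ℝ)/((ℓ:ℝ)+(i:ℝ)+1)))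
      * (p^(ℓ+i) * (1-p)^i) * (p/(1-p)) :=
    mul_nonneg (mul_nonneg hN0 hc0.le) hα0.le
  have hden : (0:ℝ) < ((Nat.choose (ℓ+2*i) i : ℝ) * ((ℓ+1:ℝ)/((ℓ:ℝ)+(i:ℝ)+1)))
      * (p^(ℓ+i) * (1-p)^i) * (p/(1-p)) + 1 := by linarith
  have hε0 : (0:ℝ) < 0.001 * (p/(1-p))^(ℓ+1) /
      (((Nat.choose (ℓ+2*i) i : ℝ) * ((ℓ+1:ℝ)/((ℓ:ℝ)+(i:ℝ)+1)))
        * (p^(ℓ+i) * (1-p)^i) * (p/(1-p)) + 1) := by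
    apply div_pos _ hden
    have : (0:ℝ) < 0.001 := by norm_num
    nlinarith
  obtain ⟨M, hM⟩ := exists_pow_lt_of_lt_one hε0 hρ1
  refine ⟨ℓ + 2*i + M, fun n hn => ?_⟩
  have ht : ℓ + 2*i ≤ n := by omega
  have hMr : M ≤ n - (ℓ + 2*i) := by omega
  -- the f value
  have hfLP : fLP ℓ i p = (p/(1-p))^(ℓ+1)
      + ((Nat.choose (ℓ+2*i) i : ℝ) * ((ℓ+1:ℝ)/((ℓ:ℝ)+(i:ℝ)+1)))
        * (p^(ℓ+i) * (1-p)^i) * (1 - p/(1-p)) := by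
    unfold fLP
    ring
  have hf1 : (p/(1-p))^(ℓ+1) ≤ fLP ℓ i p := by
    rw [hfLP]
    have h0 : (0:ℝ) ≤ ((Nat.choose (ℓ+2*i) i : ℝ) * ((ℓ+1:ℝ)/((ℓ:ℝ)+(i:ℝ)+1)))
        * (p^(ℓ+i) * (1-p)^i) * (1 - p/(1-p)) :=
      mul_nonneg (mul_nonneg hN0 hc0.le) (by linarith)
    linarith
  have hf0 : (0:ℝ) < fLP ℓ i p := lt_of_lt_of_le hA0 hf1
  -- union bound
  have hunion := mu_union_le hp hp1 n (Ftilde n ℓ) ((Fhat n ℓ ∪ Fddot n ℓ) ∩ FF n ℓ i)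
  -- tilde part
  have htilde : mu n p (Ftilde n ℓ) ≤ (p/(1-p))^(ℓ+1) := by
    have h := wR_le_alpha hp hp' n (ℓ+1)
    exact h
  -- bar part
  have hbar : mu n p ((Fhat n ℓ ∪ Fddot n ℓ) ∩ FF n ℓ i)
      = ((Apre ℓ i).card : ℝ) * (p^(ℓ+i) * (1-p)^i)
          * (1 - wR p (n - (ℓ+2*i)) 1) := by
    rw [bar_eq n ℓ i ht, mu_bar p n ℓ i ht, mu_not_reach]
  have hw1le : wR p (n - (ℓ+2*i)) 1 ≤ p/(1-p) := by
    have h := wR_le_alpha hp hp' (n - (ℓ+2*i)) 1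
    rwa [pow_one] at h
  have hw1ge : p/(1-p) - (p/(1-p)) * (2*Real.sqrt (p*(1-p)))^(n - (ℓ+2*i))
      ≤ wR p (n - (ℓ+2*i)) 1 := by
    have h := wR_deficit hp hp' (n - (ℓ+2*i)) 1 le_rfl
    norm_num at h
    linarith
  have hw0 : 0 ≤ 1 - wR p (n - (ℓ+2*i)) 1 := by linarith
  have hApre := apre_card_le ℓ i hl
  have hbar2 : mu n p ((Fhat n ℓ ∪ Fddot n ℓ) ∩ FF n ℓ i)
      ≤ ((Nat.choose (ℓ+2*i) i : ℝ) * ((ℓ+1:ℝ)/((ℓ:ℝ)+(i:ℝ)+1)))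
          * (p^(ℓ+i) * (1-p)^i)
          * (1 - p/(1-p) + (p/(1-p)) * (2*Real.sqrt (p*(1-p)))^(n - (ℓ+2*i))) := by
    rw [hbar]
    calc ((Apre ℓ i).card : ℝ) * (p^(ℓ+i) * (1-p)^i) * (1 - wR p (n - (ℓ+2*i)) 1)
        ≤ ((Nat.choose (ℓ+2*i) i : ℝ) * ((ℓ+1:ℝ)/((ℓ:ℝ)+(i:ℝ)+1)))
            * (p^(ℓ+i) * (1-p)^i) * (1 - wR p (n - (ℓ+2*i)) 1) :=
          mul_le_mul_of_nonneg_right (mul_le_mul_of_nonneg_right hApre hc0.le) hw0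
      _ ≤ _ := by
          refine mul_le_mul_of_nonneg_left ?_ (mul_nonneg hN0 hc0.le)
          linarith
  -- tail estimate
  have hρr : (2*Real.sqrt (p*(1-p)))^(n - (ℓ+2*i)) ≤ (2*Real.sqrt (p*(1-p)))^M :=
    pow_le_pow_of_le_one hρ0.le hρ1.le hMr
  have htail : ((Nat.choose (ℓ+2*i) i : ℝ) * ((ℓ+1:ℝ)/((ℓ:ℝ)+(i:ℝ)+1)))
      * (p^(ℓ+i) * (1-p)^i)
      * ((p/(1-p)) * (2*Real.sqrt (p*(1-p)))^(n - (ℓ+2*i)))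
      < 0.001 * fLP ℓ i p := by
    have h1 : ((Nat.choose (ℓ+2*i) i : ℝ) * ((ℓ+1:ℝ)/((ℓ:ℝ)+(i:ℝ)+1)))
        * (p^(ℓ+i) * (1-p)^i)
        * ((p/(1-p)) * (2*Real.sqrt (p*(1-p)))^(n - (ℓ+2*i)))
        ≤ (((Nat.choose (ℓ+2*i) i : ℝ) * ((ℓ+1:ℝ)/((ℓ:ℝ)+(i:ℝ)+1)))
            * (p^(ℓ+i) * (1-p)^i) * (p/(1-p)))
          * (2*Real.sqrt (p*(1-p)))^M := by
      have hstep := mul_le_mul_of_nonneg_left hρr hNcα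
      calc ((Nat.choose (ℓ+2*i) i : ℝ) * ((ℓ+1:ℝ)/((ℓ:ℝ)+(i:ℝ)+1)))
          * (p^(ℓ+i) * (1-p)^i)
          * ((p/(1-p)) * (2*Real.sqrt (p*(1-p)))^(n - (ℓ+2*i)))
          = (((Nat.choose (ℓ+2*i) i : ℝ) * ((ℓ+1:ℝ)/((ℓ:ℝ)+(i:ℝ)+1)))
              * (p^(ℓ+i) * (1-p)^i) * (p/(1-p)))
            * (2*Real.sqrt (p*(1-p)))^(n - (ℓ+2*i)) := by ring
        _ ≤ _ := hstep
    have h2 : (((Nat.choose (ℓ+2*i) i : ℝ) * ((ℓ+1:ℝ)/((ℓ:ℝ)+(i:ℝ)+1)))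
          * (p^(ℓ+i) * (1-p)^i) * (p/(1-p)))
        * (2*Real.sqrt (p*(1-p)))^M
        < (((Nat.choose (ℓ+2*i) i : ℝ) * ((ℓ+1:ℝ)/((ℓ:ℝ)+(i:ℝ)+1)))
            * (p^(ℓ+i) * (1-p)^i) * (p/(1-p)) + 1)
          * (0.001 * (p/(1-p))^(ℓ+1) /
              (((Nat.choose (ℓ+2*i) i : ℝ) * ((ℓ+1:ℝ)/((ℓ:ℝ)+(i:ℝ)+1)))
                * (p^(ℓ+i) * (1-p)^i) * (p/(1-p)) + 1)) := by
      have hρM0 : (0:ℝ) ≤ (2*Real.sqrt (p*(1-p)))^M := pow_nonneg hρ0.le M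
      nlinarith [hM, hε0, hNcα, hρM0]
    have h3 : (((Nat.choose (ℓ+2*i) i : ℝ) * ((ℓ+1:ℝ)/((ℓ:ℝ)+(i:ℝ)+1)))
          * (p^(ℓ+i) * (1-p)^i) * (p/(1-p)) + 1)
        * (0.001 * (p/(1-p))^(ℓ+1) /
            (((Nat.choose (ℓ+2*i) i : ℝ) * ((ℓ+1:ℝ)/((ℓ:ℝ)+(i:ℝ)+1)))
              * (p^(ℓ+i) * (1-p)^i) * (p/(1-p)) + 1))
        = 0.001 * (p/(1-p))^(ℓ+1) := by
      rw [mul_comm, div_mul_cancel₀ _ hden.ne']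
    have h4 : (0.001 : ℝ) * (p/(1-p))^(ℓ+1) ≤ 0.001 * fLP ℓ i p :=
      mul_le_mul_of_nonneg_left hf1 (by norm_num)
    linarith
  -- put everything together
  have hsum : mu n p (Ftilde n ℓ ∪ ((Fhat n ℓ ∪ Fddot n ℓ) ∩ FF n ℓ i))
      ≤ (p/(1-p))^(ℓ+1)
        + ((Nat.choose (ℓ+2*i) i : ℝ) * ((ℓ+1:ℝ)/((ℓ:ℝ)+(i:ℝ)+1)))
            * (p^(ℓ+i) * (1-p)^i) * (1 - p/(1-p))
        + ((Nat.choose (ℓ+2*i) i : ℝ) * ((ℓ+1:ℝ)/((ℓ:ℝ)+(i:ℝ)+1)))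
            * (p^(ℓ+i) * (1-p)^i)
            * ((p/(1-p)) * (2*Real.sqrt (p*(1-p)))^(n - (ℓ+2*i))) := by
    have hexp : ((Nat.choose (ℓ+2*i) i : ℝ) * ((ℓ+1:ℝ)/((ℓ:ℝ)+(i:ℝ)+1)))
        * (p^(ℓ+i) * (1-p)^i)
        * (1 - p/(1-p) + (p/(1-p)) * (2*Real.sqrt (p*(1-p)))^(n - (ℓ+2*i)))
        = ((Nat.choose (ℓ+2*i) i : ℝ) * ((ℓ+1:ℝ)/((ℓ:ℝ)+(i:ℝ)+1)))
            * (p^(ℓ+i) * (1-p)^i) * (1 - p/(1-p))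
          + ((Nat.choose (ℓ+2*i) i : ℝ) * ((ℓ+1:ℝ)/((ℓ:ℝ)+(i:ℝ)+1)))
            * (p^(ℓ+i) * (1-p)^i)
            * ((p/(1-p)) * (2*Real.sqrt (p*(1-p)))^(n - (ℓ+2*i))) := by ring
    linarith [hunion, htilde, hbar2, hexp.le, hexp.ge]
  linarith [hsum, htail, hfLP]
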